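/- Fix real matrices A ∈ ℝ^{n×n}, B₂ ∈ ℝ^{n×m}, C₂ ∈ ℝ^{p×n} and an integer r ≥ 1. Define L⁰ = {(K,γ,P,Γ) : K ∈ ℝ^{(m+n)×(p+n)} with top-left m×p block D_K = 0, γ ∈ ℝ, P a 2n×2n symmetric positive definite matrix with P₁₂ invertible, Γ an r×r symmetric matrix} and F⁰ = {(γ,Λ,X,Y,Γ) : γ ∈ ℝ, Λ ∈ ℝ^{(m+n)×(p+n)} with top-left m×p block zero, X and Y n×n symmetric with [X, I; I, Y] ≻ 0, Γ an r×r symmetric matrix}. Then the map Φ(K,γ,P,Γ) = (γ, Φ_Λ(K,P), (P⁻¹)₁₁, P₁₁, Γ, P₁₂) is a bijection from L⁰ onto F⁰ × GLₙ(ℝ), with inverse given by (γ,Λ,X,Y,Γ,Ξ) ↦ (Ψ_K(Λ,X,Y,Ξ), γ, Ψ_P(X,Y,Ξ), Γ). -/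

import Mathlib

open Matrix

noncomputable section

/-- The mapping `Φ_M(K,P)` arising in output feedback ECL constructions. -/
def PhiM {n m p : ℕ} (A : Matrix (Fin n) (Fin n) ℝ) (B₂ : Matrix (Fin n) (Fin m) ℝ)
    (C₂ : Matrix (Fin p) (Fin n) ℝ)
    (K : Matrix (Fin m ⊕ Fin n) (Fin p ⊕ Fin n) ℝ)
    (P : Matrix (Fin n ⊕ Fin n) (Fin n ⊕ Fin n) ℝ) : Matrix (Fin n) (Fin n) ℝ :=
  P.toBlocks₁₂ * K.toBlocks₂₁ * C₂ * (P⁻¹).toBlocks₁₁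
    + P.toBlocks₁₁ * B₂ * K.toBlocks₁₂ * (P⁻¹).toBlocks₂₁
    + P.toBlocks₁₂ * K.toBlocks₂₂ * (P⁻¹).toBlocks₂₁
    + P.toBlocks₁₁ * (A + B₂ * K.toBlocks₁₁ * C₂) * (P⁻¹).toBlocks₁₁

/-- The mapping `Φ_Λ(K,P)` arising in output feedback ECL constructions. -/
def PhiLam {n m p : ℕ} (A : Matrix (Fin n) (Fin n) ℝ) (B₂ : Matrix (Fin n) (Fin m) ℝ)
    (C₂ : Matrix (Fin p) (Fin n) ℝ)
    (K : Matrix (Fin m ⊕ Fin n) (Fin p ⊕ Fin n) ℝ)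
    (P : Matrix (Fin n ⊕ Fin n) (Fin n ⊕ Fin n) ℝ) :
    Matrix (Fin m ⊕ Fin n) (Fin p ⊕ Fin n) ℝ :=
  Matrix.fromBlocks K.toBlocks₁₁
    (K.toBlocks₁₁ * C₂ * (P⁻¹).toBlocks₁₁ + K.toBlocks₁₂ * (P⁻¹).toBlocks₂₁)
    (P.toBlocks₁₁ * B₂ * K.toBlocks₁₁ + P.toBlocks₁₂ * K.toBlocks₂₁)
    (PhiM A B₂ C₂ K P)

/-- The mapping `Ψ_K(Λ,X,Y,Ξ)` arising in output feedback ECL constructions. -/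
def PsiK {n m p : ℕ} (A : Matrix (Fin n) (Fin n) ℝ) (B₂ : Matrix (Fin n) (Fin m) ℝ)
    (C₂ : Matrix (Fin p) (Fin n) ℝ)
    (Λ : Matrix (Fin m ⊕ Fin n) (Fin p ⊕ Fin n) ℝ)
    (X Y Ξ : Matrix (Fin n) (Fin n) ℝ) :
    Matrix (Fin m ⊕ Fin n) (Fin p ⊕ Fin n) ℝ :=
  (Matrix.fromBlocks (1 : Matrix (Fin m) (Fin m) ℝ) 0 (Y * B₂) Ξ)⁻¹
    * (Λ - Matrix.fromBlocks 0 0 0 (Y * A * X))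
    * (Matrix.fromBlocks (1 : Matrix (Fin p) (Fin p) ℝ) (C₂ * X) 0
        (-(Ξ⁻¹ * (Y - X⁻¹) * X)))⁻¹

/-- The mapping `Ψ_P(X,Y,Ξ)` arising in output feedback ECL constructions. -/
def PsiP {n : ℕ} (X Y Ξ : Matrix (Fin n) (Fin n) ℝ) :
    Matrix (Fin n ⊕ Fin n) (Fin n ⊕ Fin n) ℝ :=
  Matrix.fromBlocks Y Ξ Ξᵀ (Ξᵀ * (Y - X⁻¹)⁻¹ * Ξ)

/-- The set `L⁰` for the LQG ECL: strictly proper policies `K` (top-left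
block `D_K = 0`), `γ ∈ ℝ`, `P ≻ 0` with `P₁₂` invertible, and symmetric `Γ`. -/
def LQGLiftedZero (n m p r : ℕ) :
    Set (Matrix (Fin m ⊕ Fin n) (Fin p ⊕ Fin n) ℝ × ℝ ×
      Matrix (Fin n ⊕ Fin n) (Fin n ⊕ Fin n) ℝ × Matrix (Fin r) (Fin r) ℝ) :=
  {t | t.1.toBlocks₁₁ = 0 ∧ t.2.2.1.PosDef ∧ IsUnit t.2.2.1.toBlocks₁₂ ∧
    t.2.2.2.IsSymm}

/-- The set `F⁰ × GLₙ(ℝ)` for the LQG ECL: `(γ, Λ, X, Y, Γ, Ξ)` with the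
top-left block of `Λ` zero, `X, Y` symmetric with `[X, I; I, Y] ≻ 0`, `Γ`
symmetric, and `Ξ` invertible. -/
def LQGCvxZeroTimesGL (n m p r : ℕ) :
    Set (ℝ × Matrix (Fin m ⊕ Fin n) (Fin p ⊕ Fin n) ℝ ×
      Matrix (Fin n) (Fin n) ℝ × Matrix (Fin n) (Fin n) ℝ ×
      Matrix (Fin r) (Fin r) ℝ × Matrix (Fin n) (Fin n) ℝ) :=
  {s | s.2.1.toBlocks₁₁ = 0 ∧ s.2.2.1.IsSymm ∧ s.2.2.2.1.IsSymm ∧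
    (Matrix.fromBlocks s.2.2.1 (1 : Matrix (Fin n) (Fin n) ℝ)
      (1 : Matrix (Fin n) (Fin n) ℝ) s.2.2.2.1).PosDef ∧
    s.2.2.2.2.1.IsSymm ∧ IsUnit s.2.2.2.2.2}

namespace ECLAux

set_option linter.unusedSectionVars false

section Helpers

variable {l q : Type*} [Fintype l] [Fintype q] [DecidableEq l] [DecidableEq q]

lemma isUnit_transpose {B : Matrix l l ℝ} (hB : IsUnit B) : IsUnit Bᵀ :=
  (Matrix.isUnit_iff_isUnit_det _).mpr (by
    rw [Matrix.det_transpose]; exact (Matrix.isUnit_iff_isUnit_det _).mp hB)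

lemma posDef_conj {A B : Matrix l l ℝ} (hA : A.PosDef) (hB : IsUnit B) :
    (Bᴴ * A * B).PosDef := by
  refine PosDef.of_dotProduct_mulVec_pos (isHermitian_conjTranspose_mul_mul B hA.1) fun x hx => ?_
  have hBi : Function.Injective B.mulVec := mulVec_injective_iff_isUnit.mpr hB
  have hBx : B *ᵥ x ≠ 0 := fun h => hx (hBi (h.trans (B.mulVec_zero).symm))
  simpa only [star_mulVec, dotProduct_mulVec, vecMul_vecMul] using hA.dotProduct_mulVec_pos hBx

lemma posDef_tconj {A B : Matrix l l ℝ} (hA : A.PosDef) (hB : IsUnit B) :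
    (Bᵀ * A * B).PosDef := by
  have := posDef_conj hA hB
  rwa [conjTranspose_eq_transpose_of_trivial] at this

lemma posDef_conjt {A B : Matrix l l ℝ} (hA : A.PosDef) (hB : IsUnit B) :
    (B * A * Bᵀ).PosDef := by
  have := posDef_tconj hA (isUnit_transpose hB)
  rwa [transpose_transpose] at this

lemma posDef_toBlocks₁₁ {M : Matrix (l ⊕ q) (l ⊕ q) ℝ} (hM : M.PosDef) :
    M.toBlocks₁₁.PosDef := by
  refine PosDef.of_dotProduct_mulVec_pos ?_ fun x hx => ?_
  · ext i j
    simpa [Matrix.toBlocks₁₁, conjTranspose_apply] using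
      congrFun (congrFun hM.1 (Sum.inl i)) (Sum.inl j)
  · have hv : Sum.elim x (0 : q → ℝ) ≠ 0 := fun h => hx (funext fun i => congrFun h (Sum.inl i))
    have h2 := hM.dotProduct_mulVec_pos hv
    rw [← fromBlocks_toBlocks M, fromBlocks_mulVec] at h2
    simpa [Function.star_sumElim, sumElim_dotProduct_sumElim] using h2

lemma posDef_toBlocks₂₂ {M : Matrix (l ⊕ q) (l ⊕ q) ℝ} (hM : M.PosDef) :
    M.toBlocks₂₂.PosDef := by
  refine PosDef.of_dotProduct_mulVec_pos ?_ fun x hx => ?_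
  · ext i j
    simpa [Matrix.toBlocks₂₂, conjTranspose_apply] using
      congrFun (congrFun hM.1 (Sum.inr i)) (Sum.inr j)
  · have hv : Sum.elim (0 : l → ℝ) x ≠ 0 := fun h => hx (funext fun i => congrFun h (Sum.inr i))
    have h2 := hM.dotProduct_mulVec_pos hv
    rw [← fromBlocks_toBlocks M, fromBlocks_mulVec] at h2
    simpa [Function.star_sumElim, sumElim_dotProduct_sumElim] using h2

lemma isSymm_toBlocks₁₁ {M : Matrix (l ⊕ q) (l ⊕ q) ℝ} (hM : M.IsHermitian) :
    M.toBlocks₁₁.IsSymm := by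
  ext i j
  simpa [Matrix.toBlocks₁₁, conjTranspose_apply] using
    congrFun (congrFun hM (Sum.inl i)) (Sum.inl j)

lemma isSymm_toBlocks₂₂ {M : Matrix (l ⊕ q) (l ⊕ q) ℝ} (hM : M.IsHermitian) :
    M.toBlocks₂₂.IsSymm := by
  ext i j
  simpa [Matrix.toBlocks₂₂, conjTranspose_apply] using
    congrFun (congrFun hM (Sum.inr i)) (Sum.inr j)

lemma posDef_fromBlocks₁₁ {A : Matrix l l ℝ} (B : Matrix l q ℝ) (D : Matrix q q ℝ)
    (hA : A.PosDef) :
    (fromBlocks A B Bᴴ D).PosDef ↔ (D - Bᴴ * A⁻¹ * B).PosDef := by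
  haveI := hA.isUnit.invertible
  constructor
  · intro h
    refine PosDef.of_dotProduct_mulVec_pos ((IsHermitian.fromBlocks₁₁ B D hA.1).mp h.1) fun y hy => ?_
    have h2 := h.dotProduct_mulVec_pos (x := Sum.elim (-((A⁻¹ * B) *ᵥ y)) y)
      (fun hc => hy (funext fun i => congrFun hc (Sum.inr i)))
    rw [dotProduct_mulVec, schur_complement_eq₁₁ B D _ _ hA.1, neg_add_cancel,
      dotProduct_zero, zero_add] at h2
    rw [dotProduct_mulVec]
    exact h2
  · intro h
    refine PosDef.of_dotProduct_mulVec_pos ((IsHermitian.fromBlocks₁₁ B D hA.1).mpr h.1) fun v hv => ?_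
    rw [dotProduct_mulVec, ← Sum.elim_comp_inl_inr v, schur_complement_eq₁₁ B D _ _ hA.1]
    by_cases hy : v ∘ Sum.inr = 0
    · have hx : v ∘ Sum.inl + (A⁻¹ * B) *ᵥ (v ∘ Sum.inr) ≠ 0 := by
        rw [hy]
        simp only [mulVec_zero, add_zero]
        intro hc
        apply hv
        funext i
        cases i with
        | inl i => exact congrFun hc i
        | inr i => exact congrFun hy i
      have t1 : 0 < star (v ∘ Sum.inl + (A⁻¹ * B) *ᵥ (v ∘ Sum.inr)) ᵥ* A ⬝ᵥ
          (v ∘ Sum.inl + (A⁻¹ * B) *ᵥ (v ∘ Sum.inr)) := by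
        rw [← dotProduct_mulVec]
        exact hA.dotProduct_mulVec_pos hx
      have t2 : star (v ∘ Sum.inr) ᵥ* (D - Bᴴ * A⁻¹ * B) ⬝ᵥ (v ∘ Sum.inr) = 0 := by
        rw [hy]; simp
      rw [t2]
      simpa using t1
    · have t1 : 0 ≤ star (v ∘ Sum.inl + (A⁻¹ * B) *ᵥ (v ∘ Sum.inr)) ᵥ* A ⬝ᵥ
          (v ∘ Sum.inl + (A⁻¹ * B) *ᵥ (v ∘ Sum.inr)) := by
        rw [← dotProduct_mulVec]
        exact hA.posSemidef.dotProduct_mulVec_nonneg _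
      have t2 : 0 < star (v ∘ Sum.inr) ᵥ* (D - Bᴴ * A⁻¹ * B) ⬝ᵥ (v ∘ Sum.inr) := by
        rw [← dotProduct_mulVec]
        exact h.dotProduct_mulVec_pos hy
      linarith

lemma posDef_fromBlocks₂₂ (A : Matrix l l ℝ) (B : Matrix l q ℝ) {D : Matrix q q ℝ}
    (hD : D.PosDef) :
    (fromBlocks A B Bᴴ D).PosDef ↔ (A - B * D⁻¹ * Bᴴ).PosDef := by
  haveI := hD.isUnit.invertible
  constructor
  · intro h
    refine PosDef.of_dotProduct_mulVec_pos ((IsHermitian.fromBlocks₂₂ A B hD.1).mp h.1) fun x hx => ?_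
    have h2 := h.dotProduct_mulVec_pos (x := Sum.elim x (-((D⁻¹ * Bᴴ) *ᵥ x)))
      (fun hc => hx (funext fun i => congrFun hc (Sum.inl i)))
    rw [dotProduct_mulVec, schur_complement_eq₂₂ A B _ _ hD.1, add_neg_cancel,
      dotProduct_zero, zero_add] at h2
    rw [dotProduct_mulVec]
    exact h2
  · intro h
    refine PosDef.of_dotProduct_mulVec_pos ((IsHermitian.fromBlocks₂₂ A B hD.1).mpr h.1) fun v hv => ?_
    rw [dotProduct_mulVec, ← Sum.elim_comp_inl_inr v, schur_complement_eq₂₂ A B _ _ hD.1]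
    by_cases hx : v ∘ Sum.inl = 0
    · have hy : (D⁻¹ * Bᴴ) *ᵥ (v ∘ Sum.inl) + v ∘ Sum.inr ≠ 0 := by
        rw [hx]
        simp only [mulVec_zero, zero_add]
        intro hc
        apply hv
        funext i
        cases i with
        | inl i => exact congrFun hx i
        | inr i => exact congrFun hc i
      have t1 : 0 < star ((D⁻¹ * Bᴴ) *ᵥ (v ∘ Sum.inl) + v ∘ Sum.inr) ᵥ* D ⬝ᵥ
          ((D⁻¹ * Bᴴ) *ᵥ (v ∘ Sum.inl) + v ∘ Sum.inr) := by
        rw [← dotProduct_mulVec]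
        exact hD.dotProduct_mulVec_pos hy
      have t2 : star (v ∘ Sum.inl) ᵥ* (A - B * D⁻¹ * Bᴴ) ⬝ᵥ (v ∘ Sum.inl) = 0 := by
        rw [hx]; simp
      rw [t2]
      simpa using t1
    · have t1 : 0 ≤ star ((D⁻¹ * Bᴴ) *ᵥ (v ∘ Sum.inl) + v ∘ Sum.inr) ᵥ* D ⬝ᵥ
          ((D⁻¹ * Bᴴ) *ᵥ (v ∘ Sum.inl) + v ∘ Sum.inr) := by
        rw [← dotProduct_mulVec]
        exact hD.posSemidef.dotProduct_mulVec_nonneg _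
      have t2 : 0 < star (v ∘ Sum.inl) ᵥ* (A - B * D⁻¹ * Bᴴ) ⬝ᵥ (v ∘ Sum.inl) := by
        rw [← dotProduct_mulVec]
        exact h.dotProduct_mulVec_pos hx
      linarith

lemma sandwich_cancel {M : Matrix l l ℝ} {R : Matrix q q ℝ} (K : Matrix l q ℝ)
    (hM : IsUnit M.det) (hR : IsUnit R.det) : M⁻¹ * (M * K * R) * R⁻¹ = K := by
  rw [← Matrix.mul_assoc M⁻¹ (M * K) R, mul_nonsing_inv_cancel_right _ _ hR,
    nonsing_inv_mul_cancel_left _ _ hM]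

lemma sandwich_cancel' {M : Matrix l l ℝ} {R : Matrix q q ℝ} (L : Matrix l q ℝ)
    (hM : IsUnit M.det) (hR : IsUnit R.det) : M * (M⁻¹ * L * R⁻¹) * R = L := by
  rw [← Matrix.mul_assoc M (M⁻¹ * L) R⁻¹, nonsing_inv_mul_cancel_right _ _ hR,
    mul_nonsing_inv_cancel_left _ _ hM]

end Helpers

section Core

variable {l : Type*} [Fintype l] [DecidableEq l]

lemma core {P : Matrix (l ⊕ l) (l ⊕ l) ℝ} (hP : P.PosDef) (hXi : IsUnit P.toBlocks₁₂) :
    P.toBlocks₂₁ = P.toBlocks₁₂ᵀ ∧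
    ((P⁻¹).toBlocks₁₁)⁻¹ = P.toBlocks₁₁ - P.toBlocks₁₂ * P.toBlocks₂₂⁻¹ * P.toBlocks₁₂ᵀ ∧
    (P.toBlocks₁₁ - ((P⁻¹).toBlocks₁₁)⁻¹).PosDef ∧
    P.toBlocks₂₂ = P.toBlocks₁₂ᵀ * (P.toBlocks₁₁ - ((P⁻¹).toBlocks₁₁)⁻¹)⁻¹ * P.toBlocks₁₂ ∧
    (P⁻¹).toBlocks₂₁ =
      -(P.toBlocks₁₂⁻¹ * (P.toBlocks₁₁ - ((P⁻¹).toBlocks₁₁)⁻¹) * (P⁻¹).toBlocks₁₁) := by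
  have hsym : P.toBlocks₂₁ = P.toBlocks₁₂ᵀ := by
    ext i j
    simpa [Matrix.toBlocks₂₁, Matrix.toBlocks₁₂, conjTranspose_apply] using
      (congrFun (congrFun hP.1 (Sum.inr i)) (Sum.inl j)).symm
  have hQpd : (P⁻¹).PosDef := hP.inv
  have hX : (P⁻¹).toBlocks₁₁.PosDef := posDef_toBlocks₁₁ hQpd
  have hW : P.toBlocks₂₂.PosDef := posDef_toBlocks₂₂ hP
  have hPdet : IsUnit P.det := (Matrix.isUnit_iff_isUnit_det P).mp hP.isUnit
  have hWdet : IsUnit P.toBlocks₂₂.det := (Matrix.isUnit_iff_isUnit_det _).mp hW.isUnit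
  have hΞdet : IsUnit P.toBlocks₁₂.det := (Matrix.isUnit_iff_isUnit_det _).mp hXi
  have hΞtdet : IsUnit (P.toBlocks₁₂ᵀ).det := by
    rw [Matrix.det_transpose]; exact hΞdet
  have hPQ : fromBlocks P.toBlocks₁₁ P.toBlocks₁₂ P.toBlocks₂₁ P.toBlocks₂₂ *
      fromBlocks (P⁻¹).toBlocks₁₁ (P⁻¹).toBlocks₁₂ (P⁻¹).toBlocks₂₁ (P⁻¹).toBlocks₂₂ = 1 := by
    rw [fromBlocks_toBlocks, fromBlocks_toBlocks]
    exact mul_nonsing_inv _ hPdet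
  rw [fromBlocks_multiply, ← fromBlocks_one] at hPQ
  obtain ⟨e1, -, e3, -⟩ := fromBlocks_inj.mp hPQ
  have h0 : P.toBlocks₂₂ * (P⁻¹).toBlocks₂₁ = -(P.toBlocks₁₂ᵀ * (P⁻¹).toBlocks₁₁) := by
    rw [← hsym]
    exact eq_neg_of_add_eq_zero_right e3
  have hQ21 : (P⁻¹).toBlocks₂₁ = -(P.toBlocks₂₂⁻¹ * (P.toBlocks₁₂ᵀ * (P⁻¹).toBlocks₁₁)) := by
    rw [← nonsing_inv_mul_cancel_left P.toBlocks₂₂ (P⁻¹).toBlocks₂₁ hWdet, h0, Matrix.mul_neg]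
  have hXinv : ((P⁻¹).toBlocks₁₁)⁻¹ =
      P.toBlocks₁₁ - P.toBlocks₁₂ * P.toBlocks₂₂⁻¹ * P.toBlocks₁₂ᵀ := by
    apply inv_eq_left_inv
    have expand : (P.toBlocks₁₁ - P.toBlocks₁₂ * P.toBlocks₂₂⁻¹ * P.toBlocks₁₂ᵀ) *
        (P⁻¹).toBlocks₁₁ =
        P.toBlocks₁₁ * (P⁻¹).toBlocks₁₁ +
          P.toBlocks₁₂ * -(P.toBlocks₂₂⁻¹ * (P.toBlocks₁₂ᵀ * (P⁻¹).toBlocks₁₁)) := by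
      simp only [Matrix.sub_mul, Matrix.mul_neg, Matrix.mul_assoc]
      try abel
    rw [expand, ← hQ21, e1]
  have hZ : P.toBlocks₁₁ - ((P⁻¹).toBlocks₁₁)⁻¹ =
      P.toBlocks₁₂ * P.toBlocks₂₂⁻¹ * P.toBlocks₁₂ᵀ := by
    rw [hXinv, sub_sub_cancel]
  have hZpd : (P.toBlocks₁₁ - ((P⁻¹).toBlocks₁₁)⁻¹).PosDef := by
    rw [hZ]
    exact posDef_conjt hW.inv hXi
  have hW2 : P.toBlocks₂₂ =
      P.toBlocks₁₂ᵀ * (P.toBlocks₁₁ - ((P⁻¹).toBlocks₁₁)⁻¹)⁻¹ * P.toBlocks₁₂ := by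
    rw [hZ, Matrix.mul_inv_rev, Matrix.mul_inv_rev, nonsing_inv_nonsing_inv _ hWdet,
      mul_nonsing_inv_cancel_left _ _ hΞtdet, nonsing_inv_mul_cancel_right _ _ hΞdet]
  have hQ21' : (P⁻¹).toBlocks₂₁ =
      -(P.toBlocks₁₂⁻¹ * (P.toBlocks₁₁ - ((P⁻¹).toBlocks₁₁)⁻¹) * (P⁻¹).toBlocks₁₁) := by
    rw [hQ21, hZ]
    have hc : P.toBlocks₁₂⁻¹ * (P.toBlocks₁₂ * P.toBlocks₂₂⁻¹ * P.toBlocks₁₂ᵀ) *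
        (P⁻¹).toBlocks₁₁ =
        P.toBlocks₂₂⁻¹ * (P.toBlocks₁₂ᵀ * (P⁻¹).toBlocks₁₁) := by
      rw [Matrix.mul_assoc P.toBlocks₁₂, nonsing_inv_mul_cancel_left _ _ hΞdet,
        Matrix.mul_assoc]
    rw [← hc]
  exact ⟨hsym, hXinv, hZpd, hW2, hQ21'⟩

end Core



end ECLAux

namespace ECLAux

section Key

variable {n m p : ℕ} (A : Matrix (Fin n) (Fin n) ℝ) (B₂ : Matrix (Fin n) (Fin m) ℝ)
  (C₂ : Matrix (Fin p) (Fin n) ℝ)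

lemma phiLam_eq (K : Matrix (Fin m ⊕ Fin n) (Fin p ⊕ Fin n) ℝ)
    {P : Matrix (Fin n ⊕ Fin n) (Fin n ⊕ Fin n) ℝ}
    (hQ21 : (P⁻¹).toBlocks₂₁ =
      -(P.toBlocks₁₂⁻¹ * (P.toBlocks₁₁ - ((P⁻¹).toBlocks₁₁)⁻¹) * (P⁻¹).toBlocks₁₁)) :
    PhiLam A B₂ C₂ K P =
      fromBlocks 1 0 (P.toBlocks₁₁ * B₂) P.toBlocks₁₂ * K *
        fromBlocks 1 (C₂ * (P⁻¹).toBlocks₁₁) 0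
          (-(P.toBlocks₁₂⁻¹ * (P.toBlocks₁₁ - ((P⁻¹).toBlocks₁₁)⁻¹) * (P⁻¹).toBlocks₁₁)) +
      fromBlocks 0 0 0 (P.toBlocks₁₁ * A * (P⁻¹).toBlocks₁₁) := by
  rw [← hQ21]
  conv_rhs => rw [← fromBlocks_toBlocks K]
  rw [fromBlocks_multiply, fromBlocks_multiply, fromBlocks_add]
  unfold PhiLam PhiM
  rw [fromBlocks_inj]
  refine ⟨?_, ?_, ?_, ?_⟩ <;>
    · simp only [Matrix.add_mul, Matrix.mul_add, Matrix.mul_assoc, Matrix.one_mul,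
        Matrix.mul_one, Matrix.zero_mul, Matrix.mul_zero, add_zero, zero_add]
      try abel

end Key

end ECLAux
namespace ECLAux

section Main

variable {n m p : ℕ}

lemma Mdet (Y : Matrix (Fin n) (Fin n) ℝ) (B₂ : Matrix (Fin n) (Fin m) ℝ)
    {Ξ : Matrix (Fin n) (Fin n) ℝ} (hΞ : IsUnit Ξ) :
    IsUnit (fromBlocks (1 : Matrix (Fin m) (Fin m) ℝ) 0 (Y * B₂) Ξ).det := by
  rw [det_fromBlocks_zero₁₂]
  simpa using (Matrix.isUnit_iff_isUnit_det Ξ).mp hΞ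

lemma Rdet (C₂X : Matrix (Fin p) (Fin n) ℝ) {S : Matrix (Fin n) (Fin n) ℝ} (hS : IsUnit S) :
    IsUnit (fromBlocks (1 : Matrix (Fin p) (Fin p) ℝ) C₂X 0 S).det := by
  rw [det_fromBlocks_zero₂₁]
  simpa using (Matrix.isUnit_iff_isUnit_det S).mp hS

lemma left_main (A : Matrix (Fin n) (Fin n) ℝ) (B₂ : Matrix (Fin n) (Fin m) ℝ)
    (C₂ : Matrix (Fin p) (Fin n) ℝ) (K : Matrix (Fin m ⊕ Fin n) (Fin p ⊕ Fin n) ℝ)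
    {P : Matrix (Fin n ⊕ Fin n) (Fin n ⊕ Fin n) ℝ}
    (hP : P.PosDef) (hXi : IsUnit P.toBlocks₁₂) :
    PsiK A B₂ C₂ (PhiLam A B₂ C₂ K P) (P⁻¹).toBlocks₁₁ P.toBlocks₁₁ P.toBlocks₁₂ = K := by
  obtain ⟨hsym, hXinv, hZpd, hW2, hQ21⟩ := core hP hXi
  have hX : (P⁻¹).toBlocks₁₁.PosDef := posDef_toBlocks₁₁ hP.inv
  have hS : IsUnit
      (-(P.toBlocks₁₂⁻¹ * (P.toBlocks₁₁ - ((P⁻¹).toBlocks₁₁)⁻¹) * (P⁻¹).toBlocks₁₁)) :=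
    (((Matrix.isUnit_nonsing_inv_iff.mpr hXi).mul hZpd.isUnit).mul hX.isUnit).neg
  have hM := Mdet P.toBlocks₁₁ B₂ hXi
  have hR := Rdet (C₂ * (P⁻¹).toBlocks₁₁) hS
  unfold PsiK
  rw [phiLam_eq A B₂ C₂ K hQ21, add_sub_cancel_right, sandwich_cancel _ hM hR]

lemma psiP_eq {P : Matrix (Fin n ⊕ Fin n) (Fin n ⊕ Fin n) ℝ}
    (hP : P.PosDef) (hXi : IsUnit P.toBlocks₁₂) :
    PsiP (P⁻¹).toBlocks₁₁ P.toBlocks₁₁ P.toBlocks₁₂ = P := by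
  obtain ⟨hsym, -, -, hW2, -⟩ := core hP hXi
  unfold PsiP
  rw [← hW2, ← hsym, fromBlocks_toBlocks]

lemma forward_posdef {P : Matrix (Fin n ⊕ Fin n) (Fin n ⊕ Fin n) ℝ}
    (hP : P.PosDef) (hXi : IsUnit P.toBlocks₁₂) :
    (fromBlocks (P⁻¹).toBlocks₁₁ (1 : Matrix (Fin n) (Fin n) ℝ)
      (1 : Matrix (Fin n) (Fin n) ℝ) P.toBlocks₁₁).PosDef := by
  obtain ⟨-, -, hZpd, -, -⟩ := core hP hXi
  have hX : (P⁻¹).toBlocks₁₁.PosDef := posDef_toBlocks₁₁ hP.inv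
  have h := (posDef_fromBlocks₁₁ (1 : Matrix (Fin n) (Fin n) ℝ) P.toBlocks₁₁ hX).mpr
    (by simpa using hZpd)
  simpa using h

lemma reverse_core {X Y Ξ : Matrix (Fin n) (Fin n) ℝ}
    (hF : (fromBlocks X (1 : Matrix (Fin n) (Fin n) ℝ)
      (1 : Matrix (Fin n) (Fin n) ℝ) Y).PosDef) (hΞ : IsUnit Ξ) :
    (PsiP X Y Ξ).PosDef ∧ ((PsiP X Y Ξ)⁻¹).toBlocks₁₁ = X ∧
      X.PosDef ∧ (Y - X⁻¹).PosDef := by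
  have hXpd : X.PosDef := by simpa using posDef_toBlocks₁₁ hF
  have hYpd : Y.PosDef := by simpa using posDef_toBlocks₂₂ hF
  have hZpd : (Y - X⁻¹).PosDef := by
    have h := (posDef_fromBlocks₁₁ (1 : Matrix (Fin n) (Fin n) ℝ) Y hXpd).mp
      (by simpa using hF)
    simpa using h
  have hXdet : IsUnit X.det := (Matrix.isUnit_iff_isUnit_det _).mp hXpd.isUnit
  have hZdet : IsUnit (Y - X⁻¹).det := (Matrix.isUnit_iff_isUnit_det _).mp hZpd.isUnit
  have hΞdet : IsUnit Ξ.det := (Matrix.isUnit_iff_isUnit_det _).mp hΞ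
  have hΞtdet : IsUnit Ξᵀ.det := by rw [Matrix.det_transpose]; exact hΞdet
  have hWpd : (Ξᵀ * (Y - X⁻¹)⁻¹ * Ξ).PosDef := posDef_tconj hZpd.inv hΞ
  have hWinv : (Ξᵀ * (Y - X⁻¹)⁻¹ * Ξ)⁻¹ = Ξ⁻¹ * ((Y - X⁻¹) * Ξᵀ⁻¹) := by
    rw [Matrix.mul_inv_rev, Matrix.mul_inv_rev, nonsing_inv_nonsing_inv _ hZdet]
  have hSchur : Y - Ξ * (Ξᵀ * (Y - X⁻¹)⁻¹ * Ξ)⁻¹ * Ξᵀ = X⁻¹ := by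
    rw [hWinv, Matrix.mul_assoc Ξ, Matrix.mul_assoc Ξ⁻¹,
      nonsing_inv_mul_cancel_right _ _ hΞtdet, mul_nonsing_inv_cancel_left _ _ hΞdet,
      sub_sub_cancel]
  have hPpd : (PsiP X Y Ξ).PosDef := by
    have h := (posDef_fromBlocks₂₂ Y Ξ hWpd).mpr
      (by rw [conjTranspose_eq_transpose_of_trivial, hSchur]; exact hXpd.inv)
    rw [conjTranspose_eq_transpose_of_trivial] at h
    exact h
  have hXi' : IsUnit (PsiP X Y Ξ).toBlocks₁₂ := by
    have : (PsiP X Y Ξ).toBlocks₁₂ = Ξ := by simp [PsiP]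
    rwa [this]
  obtain ⟨-, hXinv', -, -, -⟩ := core hPpd hXi'
  have hb11 : (PsiP X Y Ξ).toBlocks₁₁ = Y := by simp [PsiP]
  have hb12 : (PsiP X Y Ξ).toBlocks₁₂ = Ξ := by simp [PsiP]
  have hb22 : (PsiP X Y Ξ).toBlocks₂₂ = Ξᵀ * (Y - X⁻¹)⁻¹ * Ξ := by simp [PsiP]
  rw [hb11, hb12, hb22] at hXinv'
  have hQ11pd : ((PsiP X Y Ξ)⁻¹).toBlocks₁₁.PosDef := posDef_toBlocks₁₁ hPpd.inv
  have hQ11det : IsUnit ((PsiP X Y Ξ)⁻¹).toBlocks₁₁.det :=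
    (Matrix.isUnit_iff_isUnit_det _).mp hQ11pd.isUnit
  have hXinv2 : (((PsiP X Y Ξ)⁻¹).toBlocks₁₁)⁻¹ = X⁻¹ := by
    rw [hXinv']
    exact hSchur
  have hPX : ((PsiP X Y Ξ)⁻¹).toBlocks₁₁ = X := by
    have h2 := congrArg (fun M => M⁻¹) hXinv2
    simpa [nonsing_inv_nonsing_inv _ hQ11det, nonsing_inv_nonsing_inv _ hXdet] using h2
  exact ⟨hPpd, hPX, hXpd, hZpd⟩

lemma right_main (A : Matrix (Fin n) (Fin n) ℝ) (B₂ : Matrix (Fin n) (Fin m) ℝ)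
    (C₂ : Matrix (Fin p) (Fin n) ℝ) (Λ : Matrix (Fin m ⊕ Fin n) (Fin p ⊕ Fin n) ℝ)
    {X Y Ξ : Matrix (Fin n) (Fin n) ℝ}
    (hF : (fromBlocks X (1 : Matrix (Fin n) (Fin n) ℝ)
      (1 : Matrix (Fin n) (Fin n) ℝ) Y).PosDef) (hΞ : IsUnit Ξ) :
    PhiLam A B₂ C₂ (PsiK A B₂ C₂ Λ X Y Ξ) (PsiP X Y Ξ) = Λ := by
  obtain ⟨hPpd, hPX, hXpd, hZpd⟩ := reverse_core hF hΞ
  have hb11 : (PsiP X Y Ξ).toBlocks₁₁ = Y := by simp [PsiP]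
  have hb12 : (PsiP X Y Ξ).toBlocks₁₂ = Ξ := by simp [PsiP]
  have hXi' : IsUnit (PsiP X Y Ξ).toBlocks₁₂ := by rwa [hb12]
  obtain ⟨-, -, -, -, hQ21'⟩ := core hPpd hXi'
  have hS : IsUnit (-(Ξ⁻¹ * (Y - X⁻¹) * X)) :=
    (((Matrix.isUnit_nonsing_inv_iff.mpr hΞ).mul hZpd.isUnit).mul hXpd.isUnit).neg
  have hM := Mdet Y B₂ hΞ
  have hR := Rdet (C₂ * X) hS
  have hkey := phiLam_eq A B₂ C₂ (PsiK A B₂ C₂ Λ X Y Ξ) hQ21'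
  rw [hb11, hb12, hPX] at hkey
  rw [hkey]
  unfold PsiK
  rw [sandwich_cancel' _ hM hR, sub_add_cancel]

end Main

end ECLAux

open ECLAux in
/-- **Proposition 4.3, diffeomorphism part (bijectivity)**: the map
`Φ(K,γ,P,Γ) = (γ, Φ_Λ(K,P), (P⁻¹)₁₁, P₁₁, Γ, P₁₂)` is a bijection from `L⁰`
onto `F⁰ × GLₙ(ℝ)`, with inverse
`(γ,Λ,X,Y,Γ,Ξ) ↦ (Ψ_K(Λ,X,Y,Ξ), γ, Ψ_P(X,Y,Ξ), Γ)`. -/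
theorem lqg_parameterization_bijOn {n m p r : ℕ}
    (A : Matrix (Fin n) (Fin n) ℝ) (B₂ : Matrix (Fin n) (Fin m) ℝ)
    (C₂ : Matrix (Fin p) (Fin n) ℝ) :
    Set.BijOn
      (fun t : Matrix (Fin m ⊕ Fin n) (Fin p ⊕ Fin n) ℝ × ℝ ×
          Matrix (Fin n ⊕ Fin n) (Fin n ⊕ Fin n) ℝ × Matrix (Fin r) (Fin r) ℝ =>
        (t.2.1, PhiLam A B₂ C₂ t.1 t.2.2.1, (t.2.2.1⁻¹).toBlocks₁₁,
          t.2.2.1.toBlocks₁₁, t.2.2.2, t.2.2.1.toBlocks₁₂))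
      (LQGLiftedZero n m p r) (LQGCvxZeroTimesGL n m p r) ∧
    Set.InvOn
      (fun s : ℝ × Matrix (Fin m ⊕ Fin n) (Fin p ⊕ Fin n) ℝ ×
          Matrix (Fin n) (Fin n) ℝ × Matrix (Fin n) (Fin n) ℝ ×
          Matrix (Fin r) (Fin r) ℝ × Matrix (Fin n) (Fin n) ℝ =>
        (PsiK A B₂ C₂ s.2.1 s.2.2.1 s.2.2.2.1 s.2.2.2.2.2, s.1,
          PsiP s.2.2.1 s.2.2.2.1 s.2.2.2.2.2, s.2.2.2.2.1))
      (fun t : Matrix (Fin m ⊕ Fin n) (Fin p ⊕ Fin n) ℝ × ℝ ×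
          Matrix (Fin n ⊕ Fin n) (Fin n ⊕ Fin n) ℝ × Matrix (Fin r) (Fin r) ℝ =>
        (t.2.1, PhiLam A B₂ C₂ t.1 t.2.2.1, (t.2.2.1⁻¹).toBlocks₁₁,
          t.2.2.1.toBlocks₁₁, t.2.2.2, t.2.2.1.toBlocks₁₂))
      (LQGLiftedZero n m p r) (LQGCvxZeroTimesGL n m p r) := by
  have hmf : Set.MapsTo
      (fun t : Matrix (Fin m ⊕ Fin n) (Fin p ⊕ Fin n) ℝ × ℝ ×
          Matrix (Fin n ⊕ Fin n) (Fin n ⊕ Fin n) ℝ × Matrix (Fin r) (Fin r) ℝ =>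
        (t.2.1, PhiLam A B₂ C₂ t.1 t.2.2.1, (t.2.2.1⁻¹).toBlocks₁₁,
          t.2.2.1.toBlocks₁₁, t.2.2.2, t.2.2.1.toBlocks₁₂))
      (LQGLiftedZero n m p r) (LQGCvxZeroTimesGL n m p r) := by
    rintro ⟨K, γ, P, Γ⟩ ⟨hK, hPpd, hΞ, hΓ⟩
    refine ⟨?_, ?_, ?_, ?_, hΓ, hΞ⟩
    · simpa [PhiLam] using hK
    · exact isSymm_toBlocks₁₁ hPpd.inv.1
    · exact isSymm_toBlocks₁₁ hPpd.1
    · exact forward_posdef hPpd hΞ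
  have hmg : Set.MapsTo
      (fun s : ℝ × Matrix (Fin m ⊕ Fin n) (Fin p ⊕ Fin n) ℝ ×
          Matrix (Fin n) (Fin n) ℝ × Matrix (Fin n) (Fin n) ℝ ×
          Matrix (Fin r) (Fin r) ℝ × Matrix (Fin n) (Fin n) ℝ =>
        (PsiK A B₂ C₂ s.2.1 s.2.2.1 s.2.2.2.1 s.2.2.2.2.2, s.1,
          PsiP s.2.2.1 s.2.2.2.1 s.2.2.2.2.2, s.2.2.2.2.1))
      (LQGCvxZeroTimesGL n m p r) (LQGLiftedZero n m p r) := by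
    rintro ⟨γ, Λ, X, Y, Γ, Ξ⟩ ⟨hΛ, hXs, hYs, hF, hΓ, hΞ⟩
    obtain ⟨hPpd, hPX, hXpd, hZpd⟩ := reverse_core hF hΞ
    refine ⟨?_, hPpd, ?_, hΓ⟩
    · have h := congrArg Matrix.toBlocks₁₁ (right_main A B₂ C₂ Λ hF hΞ)
      simp only [PhiLam, toBlocks_fromBlocks₁₁] at h
      rw [h, hΛ]
    · have : (PsiP X Y Ξ).toBlocks₁₂ = Ξ := by simp [PsiP]
      rwa [this]
  have hinv : Set.InvOn
      (fun s : ℝ × Matrix (Fin m ⊕ Fin n) (Fin p ⊕ Fin n) ℝ ×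
          Matrix (Fin n) (Fin n) ℝ × Matrix (Fin n) (Fin n) ℝ ×
          Matrix (Fin r) (Fin r) ℝ × Matrix (Fin n) (Fin n) ℝ =>
        (PsiK A B₂ C₂ s.2.1 s.2.2.1 s.2.2.2.1 s.2.2.2.2.2, s.1,
          PsiP s.2.2.1 s.2.2.2.1 s.2.2.2.2.2, s.2.2.2.2.1))
      (fun t : Matrix (Fin m ⊕ Fin n) (Fin p ⊕ Fin n) ℝ × ℝ ×
          Matrix (Fin n ⊕ Fin n) (Fin n ⊕ Fin n) ℝ × Matrix (Fin r) (Fin r) ℝ =>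
        (t.2.1, PhiLam A B₂ C₂ t.1 t.2.2.1, (t.2.2.1⁻¹).toBlocks₁₁,
          t.2.2.1.toBlocks₁₁, t.2.2.2, t.2.2.1.toBlocks₁₂))
      (LQGLiftedZero n m p r) (LQGCvxZeroTimesGL n m p r) := by
    constructor
    · rintro ⟨K, γ, P, Γ⟩ ⟨hK, hPpd, hΞ, hΓ⟩
      simp only [Prod.mk.injEq]
      exact ⟨left_main A B₂ C₂ K hPpd hΞ, trivial, psiP_eq hPpd hΞ, trivial⟩
    · rintro ⟨γ, Λ, X, Y, Γ, Ξ⟩ ⟨hΛ, hXs, hYs, hF, hΓ, hΞ⟩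
      obtain ⟨hPpd, hPX, hXpd, hZpd⟩ := reverse_core hF hΞ
      simp only [Prod.mk.injEq]
      refine ⟨trivial, right_main A B₂ C₂ Λ hF hΞ, hPX, ?_, trivial, ?_⟩
      · simp [PsiP]
      · simp [PsiP]
  exact ⟨hinv.bijOn hmf hmg, hinv⟩
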